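/- For ζ ∈ ℝ and x ≠ 0, the improper oscillatory integral II(x) = ζ ∫_{1/|x|}^∞ λ^{-1-iζ} e^{iλx} dλ converges and satisfies |II(x)| ≤ C(1 + ζ²) for an absolute constant C, uniformly in x. -/

import Mathlib

open Complex MeasureTheory Filter

section Aux

variable (ζ x : ℝ)

noncomputable def sOsc : ℂ := -1 - Complex.I * ζ

noncomputable def uOsc (lam : ℝ) : ℂ := (lam : ℂ) ^ (sOsc ζ)
noncomputable def uOsc' (lam : ℝ) : ℂ := sOsc ζ * (lam : ℂ) ^ (sOsc ζ - 1)
noncomputable def vOsc (lam : ℝ) : ℂ := Complex.exp (Complex.I * lam * x) / (Complex.I * x)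
noncomputable def vOsc' (lam : ℝ) : ℂ := Complex.exp (Complex.I * lam * x)

lemma sOsc_re : (sOsc ζ).re = -1 := by simp [sOsc]

lemma sOsc_ne_zero : sOsc ζ ≠ 0 := by
  intro h
  have := congrArg Complex.re h
  rw [sOsc_re] at this
  simp at this

lemma sOsc_norm : ‖sOsc ζ‖ ≤ 1 + |ζ| := by
  have h : sOsc ζ = (-1 : ℂ) + (-(Complex.I * ζ)) := by rw [sOsc]; ring
  calc ‖sOsc ζ‖ = ‖(-1 : ℂ) + (-(Complex.I * ζ))‖ := by rw [h]
    _ ≤ ‖(-1 : ℂ)‖ + ‖-(Complex.I * ζ)‖ := norm_add_le _ _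
    _ = 1 + |ζ| := by simp

lemma uOsc_hasDeriv {lam : ℝ} (h : lam ≠ 0) :
    HasDerivAt (uOsc ζ) (uOsc' ζ lam) lam := by
  have h1 := hasDerivAt_ofReal_cpow_const' h (r := sOsc ζ - 1)
    (by intro hc; exact sOsc_ne_zero ζ (by linear_combination hc))
  rw [sub_add_cancel] at h1
  have h2 := h1.const_mul (sOsc ζ)
  have : (fun y : ℝ => sOsc ζ * ((y : ℂ) ^ sOsc ζ / sOsc ζ)) = uOsc ζ := by
    funext y
    rw [uOsc, mul_div_cancel₀ _ (sOsc_ne_zero ζ)]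
  rwa [this] at h2

lemma vOsc_hasDeriv (hx : x ≠ 0) (lam : ℝ) :
    HasDerivAt (vOsc x) (vOsc' x lam) lam := by
  have hIx : Complex.I * x ≠ 0 := by
    simp [Complex.ext_iff, hx]
  have h1 : HasDerivAt (fun l : ℝ => Complex.I * (l : ℂ) * (x : ℂ)) (Complex.I * x) lam := by
    simpa using ((Complex.ofRealCLM.hasDerivAt (x := lam)).const_mul Complex.I).mul_const (x : ℂ)
  have h2 := (h1.cexp).div_const (Complex.I * x)
  have : Complex.exp (Complex.I * lam * x) * (Complex.I * x) / (Complex.I * x)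
      = vOsc' x lam := by
    rw [mul_div_assoc, div_self hIx, mul_one, vOsc']
  rwa [this] at h2

lemma norm_vOsc (hx : x ≠ 0) (lam : ℝ) : ‖vOsc x lam‖ = 1 / |x| := by
  have h : (Complex.I * ↑lam * ↑x).re = 0 := by simp
  rw [vOsc, norm_div, Complex.norm_exp, h, Real.exp_zero]
  simp [Complex.norm_def, Complex.normSq_mul]

lemma norm_vOsc' (lam : ℝ) : ‖vOsc' x lam‖ = 1 := by
  rw [vOsc', Complex.norm_exp]
  have : (Complex.I * lam * x).re = 0 := by simp
  rw [this, Real.exp_zero]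

lemma norm_uOsc' {lam : ℝ} (h : 0 < lam) : ‖uOsc' ζ lam‖ = ‖sOsc ζ‖ * lam ^ (-2 : ℝ) := by
  rw [uOsc', norm_mul,
    Complex.norm_cpow_eq_rpow_re_of_pos h]
  congr 2
  simp [sOsc]
  norm_num

lemma integrableOn_uv (hx : x ≠ 0) :
    IntegrableOn (fun lam => uOsc' ζ lam * vOsc x lam) (Set.Ioi (1 / |x|)) := by
  have ha : 0 < (1 : ℝ) / |x| := by positivity
  set a := (1 : ℝ) / |x|
  have hm : AEStronglyMeasurable (fun lam => uOsc' ζ lam * vOsc x lam)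
      (volume.restrict (Set.Ioi a)) := by
    refine ContinuousOn.aestronglyMeasurable (fun t ht => ?_) measurableSet_Ioi
    refine ContinuousWithinAt.mul ?_ ?_
    · exact ((Complex.continuousAt_ofReal_cpow_const _ _
        (Or.inr (ha.trans ht).ne')).const_smul (sOsc ζ)).continuousWithinAt
    · apply Continuous.continuousWithinAt
      exact (Complex.continuous_exp.comp (by continuity)).div_const _
  refine Integrable.mono'
    ((integrableOn_Ioi_rpow_of_lt (show (-2:ℝ) < -1 by norm_num) ha).const_mul
      (‖sOsc ζ‖ * (1 / |x|))) hm ?_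
  filter_upwards [self_mem_ae_restrict measurableSet_Ioi] with lam hlam
  rw [norm_mul, norm_uOsc' ζ (ha.trans hlam), norm_vOsc x hx]
  ring_nf
  exact le_of_eq (by ring)

lemma bound_J (hx : x ≠ 0) :
    ‖∫ lam in Set.Ioi (1 / |x|), uOsc' ζ lam * vOsc x lam‖ ≤ 1 + |ζ| := by
  have ha : 0 < (1 : ℝ) / |x| := by positivity
  have hxpos : 0 < |x| := abs_pos.mpr hx
  have hg : Integrable (fun lam : ℝ => ‖sOsc ζ‖ * (1 / |x|) * lam ^ (-2 : ℝ))
      (volume.restrict (Set.Ioi (1 / |x|))) :=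
    (integrableOn_Ioi_rpow_of_lt (show (-2:ℝ) < -1 by norm_num) ha).const_mul _
  have hb : ∀ᵐ lam ∂(volume.restrict (Set.Ioi (1 / |x|))),
      ‖uOsc' ζ lam * vOsc x lam‖ ≤ ‖sOsc ζ‖ * (1 / |x|) * lam ^ (-2 : ℝ) := by
    filter_upwards [self_mem_ae_restrict measurableSet_Ioi] with lam hlam
    rw [norm_mul, norm_uOsc' ζ (ha.trans hlam), norm_vOsc x hx]
    exact le_of_eq (by ring)
  refine (norm_integral_le_of_norm_le hg hb).trans ?_
  rw [integral_const_mul, integral_Ioi_rpow_of_lt (show (-2:ℝ) < -1 by norm_num) ha]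
  have : -(1 / |x|) ^ ((-2:ℝ) + 1) / ((-2:ℝ) + 1) = |x| := by
    norm_num
    rw [Real.rpow_neg_one]
    simp
  rw [this]
  calc ‖sOsc ζ‖ * (1 / |x|) * |x| = ‖sOsc ζ‖ := by field_simp
    _ ≤ 1 + |ζ| := sOsc_norm ζ

end Aux

/-- The improper oscillatory integral `II(x) = ζ ∫_{1/|x|}^∞ λ^{-1-iζ} e^{iλx} dλ`
converges (as a limit of truncated integrals) and is bounded by `C(1+ζ²)`,
uniformly in `x ≠ 0`. -/
theorem improper_oscillatory_integral_bound :
    ∃ C : ℝ, 0 ≤ C ∧ ∀ ζ : ℝ, ∀ x : ℝ, x ≠ 0 →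
      ∃ L : ℂ,
        Tendsto (fun R : ℝ =>
            (ζ : ℂ) * ∫ lam in Set.Ioc (1 / |x|) R,
              (lam : ℂ) ^ (-1 - Complex.I * ζ) * Complex.exp (Complex.I * lam * x))
          atTop (nhds L) ∧
        ‖L‖ ≤ C * (1 + ζ ^ 2) := by
  refine ⟨2, by norm_num, fun ζ x hx => ?_⟩
  have hxpos : 0 < |x| := abs_pos.mpr hx
  have ha : 0 < (1 : ℝ) / |x| := by positivity
  set a : ℝ := 1 / |x| with ha_def
  set J : ℂ := ∫ lam in Set.Ioi a, uOsc' ζ lam * vOsc x lam with hJ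
  refine ⟨(ζ : ℂ) * (0 - uOsc ζ a * vOsc x a - J), ?_, ?_⟩
  · -- convergence
    have key : ∀ R, a ≤ R →
        (∫ lam in Set.Ioc a R,
          (lam : ℂ) ^ (-1 - Complex.I * ζ) * Complex.exp (Complex.I * lam * x))
        = uOsc ζ R * vOsc x R - uOsc ζ a * vOsc x a
          - ∫ lam in a..R, uOsc' ζ lam * vOsc x lam := by
      intro R hR
      rw [← intervalIntegral.integral_of_le hR]
      have huIcc : Set.uIcc a R = Set.Icc a R := Set.uIcc_of_le hR
      have hu : ∀ y ∈ Set.uIcc a R, HasDerivAt (uOsc ζ) (uOsc' ζ y) y := by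
        intro y hy
        rw [huIcc] at hy
        exact uOsc_hasDeriv ζ (ha.trans_le hy.1).ne'
      have hv : ∀ y ∈ Set.uIcc a R, HasDerivAt (vOsc x) (vOsc' x y) y :=
        fun y _ => vOsc_hasDeriv x hx y
      have hu' : IntervalIntegrable (uOsc' ζ) volume a R := by
        apply ContinuousOn.intervalIntegrable
        intro y hy
        rw [huIcc] at hy
        exact ((Complex.continuousAt_ofReal_cpow_const _ _
          (Or.inr (ha.trans_le hy.1).ne')).const_smul (sOsc ζ)).continuousWithinAt
      have hv' : IntervalIntegrable (vOsc' x) volume a R := by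
        apply Continuous.intervalIntegrable
        exact Complex.continuous_exp.comp (by continuity)
      have := intervalIntegral.integral_mul_deriv_eq_deriv_mul hu hv hu' hv'
      simpa [uOsc, vOsc', sOsc] using this
    have t1 : Tendsto (fun R => ∫ lam in a..R, uOsc' ζ lam * vOsc x lam)
        atTop (nhds J) :=
      intervalIntegral_tendsto_integral_Ioi a (integrableOn_uv ζ x hx) tendsto_id
    have t2 : Tendsto (fun R => uOsc ζ R * vOsc x R) atTop (nhds 0) := by
      have hg0 : Tendsto (fun R : ℝ => R ^ (-1 : ℝ) * (1 / |x|)) atTop (nhds 0) := by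
        simpa using (tendsto_rpow_neg_atTop (show (0:ℝ) < 1 by norm_num)).mul_const (1 / |x|)
      refine squeeze_zero_norm' ?_ hg0
      filter_upwards [eventually_gt_atTop (0 : ℝ)] with R hR
      rw [norm_mul, norm_vOsc x hx, uOsc,
        Complex.norm_cpow_eq_rpow_re_of_pos hR, sOsc_re]
    have t3 : Tendsto (fun R =>
        (ζ : ℂ) * (uOsc ζ R * vOsc x R - uOsc ζ a * vOsc x a
          - ∫ lam in a..R, uOsc' ζ lam * vOsc x lam)) atTop
        (nhds ((ζ : ℂ) * (0 - uOsc ζ a * vOsc x a - J))) :=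
      ((t2.sub_const _).sub t1).const_mul _
    refine t3.congr' ?_
    filter_upwards [eventually_ge_atTop a] with R hR
    rw [key R hR]
  · -- norm bound
    have h1 : ‖uOsc ζ a * vOsc x a‖ = 1 := by
      rw [norm_mul, norm_vOsc x hx, uOsc,
        Complex.norm_cpow_eq_rpow_re_of_pos ha, sOsc_re, ha_def]
      rw [Real.rpow_neg_one]
      field_simp
    have h2 : ‖J‖ ≤ 1 + |ζ| := bound_J ζ x hx
    calc ‖(ζ : ℂ) * (0 - uOsc ζ a * vOsc x a - J)‖
        = |ζ| * ‖0 - uOsc ζ a * vOsc x a - J‖ := by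
          rw [norm_mul, Complex.norm_real, Real.norm_eq_abs]
      _ ≤ |ζ| * (‖uOsc ζ a * vOsc x a‖ + ‖J‖) := by
          apply mul_le_mul_of_nonneg_left _ (abs_nonneg ζ)
          rw [zero_sub]
          exact (norm_sub_le _ _).trans (by rw [norm_neg])
      _ ≤ |ζ| * (1 + (1 + |ζ|)) := by
          apply mul_le_mul_of_nonneg_left _ (abs_nonneg ζ)
          rw [h1]
          linarith
      _ ≤ 2 * (1 + ζ ^ 2) := by nlinarith [sq_nonneg (|ζ| - 1), _root_.sq_abs ζ, abs_nonneg ζ]
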